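/- Let s₁, s₀ : [0,T] → (0,1] with s₁s₀ > 0, λ₀ > 0 measurable, ψ ≠ ψ' real numbers, λ₁ = e^ψλ₀, and h(1) = 1, h(0) = −1. Define G(ψ') = ∫₀^T [ λ₁(y)s₁(y) − ( λ₁(y)s₁(y) + λ₀(y)s₀(y) ) e^{ψ'} s₁(y) / ( e^{ψ'}s₁(y) + s₀(y) ) ] dy. Then G(ψ') and G(ψ) = 0 satisfy: G(ψ') < 0 if ψ' > ψ and G(ψ') > 0 if ψ' < ψ (assuming ∫₀^T λ₀(y) s₀(y) s₁(y) dy > 0). -/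

import Mathlib

open Real intervalIntegral

/-- Sign property of the population estimating function with h(1)=1, h(0)=−1:
G(ψ') < 0 for ψ' > ψ and G(ψ') > 0 for ψ' < ψ. -/
theorem estimating_function_sign
    (lam₀ s₁ s₀ : ℝ → ℝ) (T ψ ψ' : ℝ) (hT : 0 < T)
    (hlam₀ : ∀ y ∈ Set.Icc 0 T, 0 < lam₀ y)
    (hs₁ : ∀ y ∈ Set.Icc 0 T, s₁ y ∈ Set.Ioc (0 : ℝ) 1)
    (hs₀ : ∀ y ∈ Set.Icc 0 T, s₀ y ∈ Set.Ioc (0 : ℝ) 1)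
    (hprod : ∀ y ∈ Set.Icc 0 T, 0 < s₁ y * s₀ y)
    (hcl : ContinuousOn lam₀ (Set.Icc 0 T))
    (hcs₁ : ContinuousOn s₁ (Set.Icc 0 T))
    (hcs₀ : ContinuousOn s₀ (Set.Icc 0 T))
    (hne : ψ ≠ ψ')
    (lam₁ : ℝ → ℝ) (hph : ∀ y, lam₁ y = Real.exp ψ * lam₀ y)
    (hpos : 0 < ∫ y in (0:ℝ)..T, lam₀ y * s₀ y * s₁ y)
    (G : ℝ → ℝ)
    (hG : ∀ p, G p = ∫ y in (0:ℝ)..T,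
      (lam₁ y * s₁ y -
        (lam₁ y * s₁ y + lam₀ y * s₀ y) * (Real.exp p * s₁ y) /
          (Real.exp p * s₁ y + s₀ y))) :
    (ψ < ψ' → G ψ' < 0) ∧ (ψ' < ψ → 0 < G ψ') := by
  have hT' : (0:ℝ) ≤ T := hT.le
  set c := Real.exp ψ - Real.exp ψ' with hc
  set f : ℝ → ℝ := fun y =>
    lam₀ y * s₀ y * s₁ y * c / (Real.exp ψ' * s₁ y + s₀ y) with hf
  have hd : ∀ y ∈ Set.Icc (0:ℝ) T, 0 < Real.exp ψ' * s₁ y + s₀ y := by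
    intro y hy
    have h1 := (hs₁ y hy).1
    have h0 := (hs₀ y hy).1
    positivity
  have key : G ψ' = ∫ y in (0:ℝ)..T, f y := by
    rw [hG]
    apply intervalIntegral.integral_congr
    intro y hy
    rw [Set.uIcc_of_le hT'] at hy
    have hdy := (hd y hy).ne'
    simp only [hf, hph, hc]
    rw [eq_div_iff hdy, sub_mul, div_mul_cancel₀ _ hdy]
    ring
  have hcont : ContinuousOn f (Set.Icc 0 T) := by
    apply ContinuousOn.div
    · exact ((hcl.mul hcs₀).mul hcs₁).mul continuousOn_const
    · exact (continuousOn_const.mul hcs₁).add hcs₀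
    · intro y hy; exact (hd y hy).ne'
  have hint : IntervalIntegrable f MeasureTheory.volume 0 T :=
    (by rw [Set.uIcc_of_le hT']; exact hcont : ContinuousOn f (Set.uIcc 0 T)).intervalIntegrable
  have hsign : ∀ y ∈ Set.Ioo (0:ℝ) T, 0 < lam₀ y * s₀ y * s₁ y / (Real.exp ψ' * s₁ y + s₀ y) := by
    intro y hy
    have hy' : y ∈ Set.Icc (0:ℝ) T := Set.mem_Icc_of_Ioo hy
    have h1 := (hs₁ y hy').1
    have h0 := (hs₀ y hy').1
    have hl := hlam₀ y hy'
    have := hd y hy'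
    positivity
  have hfy : ∀ y, f y = (lam₀ y * s₀ y * s₁ y / (Real.exp ψ' * s₁ y + s₀ y)) * c := by
    intro y; simp only [hf]; ring
  constructor
  · intro hlt
    have hcneg : c < 0 := by rw [hc, sub_neg]; exact Real.exp_lt_exp.2 hlt
    have hpos' : 0 < ∫ y in (0:ℝ)..T, -(f y) := by
      apply intervalIntegral.intervalIntegral_pos_of_pos_on hint.neg _ hT
      intro y hy
      show 0 < -(f y)
      rw [hfy]
      exact neg_pos.2 (mul_neg_of_pos_of_neg (hsign y hy) hcneg)
    rw [intervalIntegral.integral_neg] at hpos'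
    rw [key]; linarith
  · intro hlt
    have hcpos : 0 < c := by rw [hc, sub_pos]; exact Real.exp_lt_exp.2 hlt
    have hpos' : 0 < ∫ y in (0:ℝ)..T, f y := by
      apply intervalIntegral.intervalIntegral_pos_of_pos_on hint _ hT
      intro y hy
      rw [hfy]
      exact mul_pos (hsign y hy) hcpos
    rw [key]; exact hpos'
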